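/- Let W be strictly increasing right-continuous and V strictly increasing left-continuous on [0,1] with W(0)=V(0)=0. Define F₂(s) = ∫_{[0,s)} (W(x) − W(ξ)) dV(ξ) for fixed x ∈ [0,1], and recursively F_{2n}(s) by alternating integration as F_{2n}(s) = ∫_{[0,s)} F_{2n-1}(x) − F_{2n-1}(ξ) dV(ξ), F_{2n+1}(s) = ∫_{(0,s]} F_{2n}(x) − F_{2n}(ξ) dW(ξ) with F₁(s)=W(s). Then for all 0 ≤ s ≤ x ≤ 1 and n ≥ 1, F_{2n}(x) − F_{2n}(s) ≤ (F₂(x) − F₂(s))ⁿ / n!. -/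

import Mathlib

open MeasureTheory Set

lemma tail_bound (ν : Measure ℝ) [IsFiniteMeasure ν] (s x : ℝ) (t : ℝ) :
    ν ({a | t ≤ (ν (Ioo a x)).toReal} ∩ Ico s x) ≤ ν (Ico s x) - ENNReal.ofReal t := by
  set M := ν (Ico s x) with hM
  set S := {a | t ≤ (ν (Ioo a x)).toReal} ∩ Ico s x with hS
  have dagger : ∀ ξ ∈ S, ν (Icc s ξ) + ENNReal.ofReal t ≤ M := by
    rintro ξ ⟨hξt, hξs, hξx⟩
    have hsplit : ν (Icc s ξ) + ν (Ioo ξ x) = M := by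
      rw [← measure_union (Set.disjoint_left.2 fun a ha hb => absurd hb.1 (not_lt.2 ha.2))
        measurableSet_Ioo, Set.Icc_union_Ioo_eq_Ico hξs hξx]
    have h2 : ENNReal.ofReal t ≤ ν (Ioo ξ x) := by
      rw [← ENNReal.ofReal_toReal (measure_ne_top ν (Ioo ξ x))]
      exact ENNReal.ofReal_le_ofReal hξt
    calc ν (Icc s ξ) + ENNReal.ofReal t ≤ ν (Icc s ξ) + ν (Ioo ξ x) := by gcongr
      _ = M := hsplit
  rcases S.eq_empty_or_nonempty with hSe | hSne
  · simp [hSe]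
  have hbdd : BddAbove S := bddAbove_Ico.mono (inter_subset_right)
  set b := sSup S with hb
  by_cases hbS : b ∈ S
  · have h1 : S ⊆ Icc s b := fun ξ hξ => ⟨hξ.2.1, le_csSup hbdd hξ⟩
    exact (measure_mono h1).trans
      (ENNReal.le_sub_of_add_le_right ENNReal.ofReal_ne_top (dagger b hbS))
  · obtain ⟨ξ₀, hξ₀⟩ := hSne
    have hSne : S.Nonempty := ⟨ξ₀, hξ₀⟩
    have hξ₀b : ξ₀ < b := lt_of_le_of_ne (le_csSup hbdd hξ₀) (fun h => hbS (h ▸ hξ₀))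
    set c : ℕ → ℝ := fun m => b - (b - ξ₀) / (m + 1) with hc
    have hcmono : Monotone c := by
      intro m₁ m₂ h
      have : (b - ξ₀) / (m₂ + 1) ≤ (b - ξ₀) / (m₁ + 1) := by
        apply div_le_div_of_nonneg_left (by linarith) (by positivity) (by exact_mod_cast by linarith)
      simp only [hc]; linarith
    have hcover : S ⊆ ⋃ m, Icc s (c m) := by
      intro y hy
      have hyb : y < b := lt_of_le_of_ne (le_csSup hbdd hy) (fun h => hbS (h ▸ hy))
      obtain ⟨m, hm⟩ := exists_nat_ge ((b - ξ₀) / (b - y))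
      refine mem_iUnion.2 ⟨m, hy.2.1, ?_⟩
      have hby : 0 < b - y := by linarith
      have : (b - ξ₀) / (m + 1) ≤ b - y := by
        rw [div_le_iff₀ (by positivity)]
        have := (div_le_iff₀ hby).1 hm
        nlinarith [hby]
      simp only [hc]; linarith
    have hIm : ∀ m, ν (Icc s (c m)) ≤ M - ENNReal.ofReal t := by
      intro m
      have hcb : c m < b := by
        have : 0 < (b - ξ₀) / (m + 1) := div_pos (by linarith) (by positivity)
        simp only [hc]; linarith
      obtain ⟨ξ, hξS, hcξ⟩ := exists_lt_of_lt_csSup hSne hcb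
      exact ENNReal.le_sub_of_add_le_right ENNReal.ofReal_ne_top <|
        (add_le_add_left (measure_mono (Icc_subset_Icc_right hcξ.le)) _).trans (dagger ξ hξS)
    calc ν S ≤ ν (⋃ m, Icc s (c m)) := measure_mono hcover
      _ = ⨆ m, ν (Icc s (c m)) :=
          Directed.measure_iUnion
            (Monotone.directed_le fun m₁ m₂ h => Icc_subset_Icc_right (hcmono h))
      _ ≤ M - ENNReal.ofReal t := iSup_le hIm

lemma key_lint (ν : Measure ℝ) [IsFiniteMeasure ν] (s x : ℝ) (n : ℕ) :
    ∫⁻ ξ in Ico s x, (ν (Ioo ξ x)) ^ (n+1) ∂ν ≤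
      ENNReal.ofReal ((ν (Ico s x)).toReal ^ (n+2) / (n+2)) := by
  set f : ℝ → ℝ := fun a => (ν (Ioo a x)).toReal with hf
  have hf_anti : Antitone f := fun a b hab =>
    ENNReal.toReal_mono (measure_ne_top _ _) (measure_mono (Ioo_subset_Ioo_left hab))
  have hf_meas : Measurable f := hf_anti.measurable
  have hf_nn : ∀ a, 0 ≤ f a := fun a => ENNReal.toReal_nonneg
  set Mr : ℝ := (ν (Ico s x)).toReal with hMr
  have hMr_nn : 0 ≤ Mr := ENNReal.toReal_nonneg
  have hM : ν (Ico s x) = ENNReal.ofReal Mr := (ENNReal.ofReal_toReal (measure_ne_top _ _)).symm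
  -- step 1 : rewrite integrand
  have step1 : ∫⁻ ξ in Ico s x, (ν (Ioo ξ x)) ^ (n+1) ∂ν
      = ∫⁻ ξ in Ico s x, ENNReal.ofReal (f ξ ^ (n+1)) ∂ν := by
    refine lintegral_congr fun ξ => ?_
    rw [ENNReal.ofReal_pow (hf_nn ξ), ENNReal.ofReal_toReal (measure_ne_top _ _)]
  -- layer cake
  set g : ℝ → ℝ := fun t => ((n:ℝ)+1) * t ^ n with hg
  have hg_cont : Continuous g := continuous_const.mul (continuous_pow n)
  have hpow : ∀ y : ℝ, (∫ t in (0:ℝ)..y, g t) = y ^ (n+1) := by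
    intro y
    rw [hg]
    rw [intervalIntegral.integral_const_mul, integral_pow]
    rw [zero_pow (Nat.succ_ne_zero n)]
    field_simp
    simp
  have layer := lintegral_comp_eq_lintegral_meas_le_mul (ν.restrict (Ico s x))
    (Filter.Eventually.of_forall hf_nn) hf_meas.aemeasurable
    (fun t _ => hg_cont.intervalIntegrable 0 t)
    ((ae_restrict_iff' measurableSet_Ioi).2 (Filter.Eventually.of_forall fun t ht => by
      have : (0:ℝ) < t := ht
      positivity))
  simp only [hpow] at layer
  rw [step1, layer]
  -- bound the tail integral
  have step3 : ∫⁻ t in Ioi (0:ℝ), (ν.restrict (Ico s x)) {a | t ≤ f a} * ENNReal.ofReal (g t)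
      ≤ ∫⁻ t in Ioi (0:ℝ), (ENNReal.ofReal Mr - ENNReal.ofReal t) * ENNReal.ofReal (g t) := by
    refine lintegral_mono fun t => ?_
    rw [Measure.restrict_apply (measurableSet_le measurable_const hf_meas)]
    exact mul_le_mul_left ((tail_bound ν s x t).trans_eq (by rw [hM])) _
  refine step3.trans ?_
  -- compute the RHS
  have hsplit : (Ioi (0:ℝ)) = Ioc 0 Mr ∪ Ioi Mr := (Ioc_union_Ioi_eq_Ioi hMr_nn).symm
  rw [hsplit, lintegral_union measurableSet_Ioi (Ioc_disjoint_Ioi le_rfl)]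
  have hzero : ∫⁻ t in Ioi Mr, (ENNReal.ofReal Mr - ENNReal.ofReal t) * ENNReal.ofReal (g t) = 0 := by
    rw [setLIntegral_congr_fun measurableSet_Ioi
      (fun t (ht : Mr < t) => ?_), lintegral_zero]
    rw [tsub_eq_zero_of_le (ENNReal.ofReal_le_ofReal ht.le), zero_mul]
  rw [hzero, add_zero]
  have heq : ∫⁻ t in Ioc 0 Mr, (ENNReal.ofReal Mr - ENNReal.ofReal t) * ENNReal.ofReal (g t)
      = ∫⁻ t in Ioc 0 Mr, ENNReal.ofReal ((Mr - t) * g t) := by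
    refine setLIntegral_congr_fun measurableSet_Ioc
      (fun t ht => ?_)
    rw [ENNReal.ofReal_mul (by linarith [ht.2] : (0:ℝ) ≤ Mr - t), ENNReal.ofReal_sub _ ht.1.le]
  rw [heq]
  have hint : IntegrableOn (fun t => (Mr - t) * g t) (Ioc 0 Mr) volume :=
    ((continuous_const.sub continuous_id).mul hg_cont).integrableOn_Ioc
  rw [← ofReal_integral_eq_lintegral_ofReal hint
    ((ae_restrict_iff' measurableSet_Ioc).2 (Filter.Eventually.of_forall fun t ht => by
      have h1 : (0:ℝ) < t := ht.1
      have h2 : t ≤ Mr := ht.2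
      have hgt : (0:ℝ) ≤ g t := by rw [hg]; positivity
      show (0:ℝ) ≤ (Mr - t) * g t
      exact mul_nonneg (by linarith) hgt))]
  apply ENNReal.ofReal_le_ofReal
  rw [← intervalIntegral.integral_of_le hMr_nn]
  have hcalc : ∫ t in (0:ℝ)..Mr, (Mr - t) * g t = Mr ^ (n+2) / (n+2) := by
    have h1 : (fun t => (Mr - t) * g t)
        = fun t => (((n:ℝ)+1) * Mr) * t ^ n - ((n:ℝ)+1) * t ^ (n+1) := by
      funext t; rw [hg]; ring
    rw [h1, intervalIntegral.integral_sub
      ((by fun_prop : Continuous fun t : ℝ => ((n:ℝ)+1) * Mr * t ^ n).intervalIntegrable 0 Mr)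
      ((by fun_prop : Continuous fun t : ℝ => ((n:ℝ)+1) * t ^ (n+1)).intervalIntegrable 0 Mr),
      intervalIntegral.integral_const_mul, intervalIntegral.integral_const_mul,
      integral_pow, integral_pow, zero_pow (Nat.succ_ne_zero n), zero_pow (Nat.succ_ne_zero (n+1))]
    have hn1 : ((n:ℝ) + 1) ≠ 0 := by positivity
    have hn2 : ((n:ℝ) + 2) ≠ 0 := by positivity
    field_simp
    push_cast
    ring
  rw [hcalc]


theorem stmt4 (W : StieltjesFunction ℝ) (V : ℝ → ℝ) (μV : Measure ℝ) [IsFiniteMeasure μV]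
    (hW : StrictMonoOn W (Set.Icc 0 1)) (hW0 : W 0 = 0)
    (hV : StrictMonoOn V (Set.Icc 0 1)) (hV0 : V 0 = 0)
    (hVleft : ∀ y ∈ Set.Ioc (0:ℝ) 1, ContinuousWithinAt V (Set.Iic y) y)
    (hμV : ∀ a b : ℝ, 0 ≤ a → a ≤ b → b ≤ 1 →
      μV (Set.Ico a b) = ENNReal.ofReal (V b - V a))
    (x : ℝ) (hx : x ∈ Set.Icc (0:ℝ) 1)
    (F : ℕ → ℝ → ℝ)
    (hF1 : ∀ s, F 1 s = W s)
    (hFeven : ∀ n : ℕ, 1 ≤ n → ∀ s : ℝ,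
      F (2*n) s = ∫ ξ in Set.Ico (0:ℝ) s, (F (2*n-1) x - F (2*n-1) ξ) ∂μV)
    (hFodd : ∀ n : ℕ, 1 ≤ n → ∀ s : ℝ,
      F (2*n+1) s = ∫ ξ in Set.Ioc (0:ℝ) s, (F (2*n) x - F (2*n) ξ) ∂W.measure) :
    ∀ n : ℕ, 1 ≤ n → ∀ s : ℝ, 0 ≤ s → s ≤ x →
      F (2*n) x - F (2*n) s ≤ (F 2 x - F 2 s) ^ n / (n.factorial : ℝ) := by
  obtain ⟨hx0, hx1⟩ := hx
  have hxIcc : x ∈ Icc (0:ℝ) 1 := ⟨hx0, hx1⟩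
  have hxmem : x ∈ Icc (0:ℝ) x := ⟨hx0, le_rfl⟩
  -- generic integrability of `C - h` for `h` monotone on `[0, x]`
  have hIntegrable : ∀ (h : ℝ → ℝ), MonotoneOn h (Icc 0 x) →
      ∀ (m : Measure ℝ), m (Icc 0 x) ≠ ⊤ → ∀ (C : ℝ) (A : Set ℝ), MeasurableSet A →
      A ⊆ Icc 0 x → IntegrableOn (fun ξ => C - h ξ) A m := by
    intro h hmono m hm C A hA hAsub
    set g : ℝ → ℝ := fun t => h (max 0 (min t x)) with hgdef
    have hclamp : ∀ t : ℝ, max 0 (min t x) ∈ Icc (0:ℝ) x :=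
      fun t => ⟨le_max_left _ _, max_le (by linarith) (min_le_right _ _)⟩
    have hgmono : Monotone g := by
      intro a b hab
      exact hmono (hclamp a) (hclamp b)
        (max_le_max le_rfl (min_le_min_right _ hab))
    have hgmeas : Measurable g := hgmono.measurable
    have hgbound : ∀ t : ℝ, h 0 ≤ g t ∧ g t ≤ h x := by
      intro t
      constructor
      · exact hmono ⟨le_rfl, hx0⟩ (hclamp t) (hclamp t).1
      · exact hmono (hclamp t) ⟨hx0, le_rfl⟩ (hclamp t).2
    have heq : EqOn (fun ξ => C - h ξ) (fun ξ => C - g ξ) A := by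
      intro t ht
      have h1 : max 0 (min t x) = t := by
        have := hAsub ht
        rw [min_eq_left this.2, max_eq_right this.1]
      simp only [hgdef, h1]
    refine (integrableOn_congr_fun heq hA).mpr ?_
    haveI : IsFiniteMeasure (m.restrict A) := by
      constructor
      rw [Measure.restrict_apply_univ]
      exact lt_of_le_of_lt (measure_mono hAsub) (lt_top_iff_ne_top.2 hm)
    refine ⟨(measurable_const.sub hgmeas).aestronglyMeasurable, ?_⟩
    apply HasFiniteIntegral.of_bounded (C := |C - h 0| + |C - h x|)
    refine ae_of_all _ fun t => ?_
    have h1 := (hgbound t).1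
    have h2 := (hgbound t).2
    rw [Real.norm_eq_abs]
    rcases abs_cases (C - h 0) with ⟨e1, _⟩ | ⟨e1, _⟩ <;>
      rcases abs_cases (C - h x) with ⟨e2, _⟩ | ⟨e2, _⟩ <;>
      rcases abs_cases (C - g t) with ⟨e3, _⟩ | ⟨e3, _⟩ <;> linarith
  have hμVIcc : μV (Icc 0 x) ≠ ⊤ := measure_ne_top _ _
  have hWIcc : W.measure (Icc 0 x) ≠ ⊤ := measure_Icc_lt_top.ne
  -- monotonicity of all the F's on [0, x]
  have mono_pair : ∀ m : ℕ, 1 ≤ m →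
      MonotoneOn (F (2*m-1)) (Icc 0 x) ∧ MonotoneOn (F (2*m)) (Icc 0 x) := by
    have evenStep : ∀ m : ℕ, 1 ≤ m → MonotoneOn (F (2*m-1)) (Icc 0 x) →
        MonotoneOn (F (2*m)) (Icc 0 x) := by
      intro m hm hmono a ha b hb hab
      have hInt : ∀ B : Set ℝ, MeasurableSet B → B ⊆ Icc 0 x →
          IntegrableOn (fun ξ => F (2*m-1) x - F (2*m-1) ξ) B μV :=
        fun B h1 h2 => hIntegrable _ hmono μV hμVIcc _ B h1 h2
      rw [hFeven m hm a, hFeven m hm b,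
        ← Ico_union_Ico_eq_Ico ha.1 hab,
        setIntegral_union (Set.disjoint_left.2 fun c hc hc' => absurd hc'.1 (not_le.2 hc.2))
          measurableSet_Ico
          (hInt _ measurableSet_Ico (fun c hc => ⟨hc.1, hc.2.le.trans ha.2⟩))
          (hInt _ measurableSet_Ico (fun c hc => ⟨ha.1.trans hc.1, hc.2.le.trans hb.2⟩))]
      have : 0 ≤ ∫ ξ in Ico a b, (F (2*m-1) x - F (2*m-1) ξ) ∂μV := by
        refine setIntegral_nonneg measurableSet_Ico fun c hc => ?_
        have hcm : c ∈ Icc (0:ℝ) x := ⟨ha.1.trans hc.1, hc.2.le.trans hb.2⟩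
        have := hmono hcm hxmem hcm.2
        linarith
      linarith
    have oddStep : ∀ m : ℕ, 1 ≤ m → MonotoneOn (F (2*m)) (Icc 0 x) →
        MonotoneOn (F (2*m+1)) (Icc 0 x) := by
      intro m hm hmono a ha b hb hab
      have hInt : ∀ B : Set ℝ, MeasurableSet B → B ⊆ Icc 0 x →
          IntegrableOn (fun ξ => F (2*m) x - F (2*m) ξ) B W.measure :=
        fun B h1 h2 => hIntegrable _ hmono W.measure hWIcc _ B h1 h2
      rw [hFodd m hm a, hFodd m hm b,
        ← Ioc_union_Ioc_eq_Ioc ha.1 hab,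
        setIntegral_union (Set.disjoint_left.2 fun c hc hc' => absurd hc'.1 (not_lt.2 hc.2))
          measurableSet_Ioc
          (hInt _ measurableSet_Ioc (fun c hc => ⟨hc.1.le, hc.2.trans ha.2⟩))
          (hInt _ measurableSet_Ioc (fun c hc => ⟨(ha.1.trans hc.1.le), hc.2.trans hb.2⟩))]
      have : 0 ≤ ∫ ξ in Ioc a b, (F (2*m) x - F (2*m) ξ) ∂W.measure := by
        refine setIntegral_nonneg measurableSet_Ioc fun c hc => ?_
        have hcm : c ∈ Icc (0:ℝ) x := ⟨ha.1.trans hc.1.le, hc.2.trans hb.2⟩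
        have := hmono hcm hxmem hcm.2
        linarith
      linarith
    intro m hm
    induction m, hm using Nat.le_induction with
    | base =>
      have h1 : MonotoneOn (F 1) (Icc 0 x) := by
        intro a _ b _ hab
        rw [hF1, hF1]; exact W.mono hab
      exact ⟨h1, evenStep 1 le_rfl h1⟩
    | succ m hm ih =>
      have hidx1 : 2*(m+1)-1 = 2*m+1 := by omega
      have hidx2 : 2*m+1+1 = 2*(m+1) := by omega
      have h1 : MonotoneOn (F (2*(m+1)-1)) (Icc 0 x) := by
        rw [hidx1]; exact oddStep m hm ih.2
      refine ⟨h1, evenStep (m+1) (by omega) h1⟩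
  
  -- difference formulas
  have diff_even : ∀ m : ℕ, 1 ≤ m → ∀ s : ℝ, 0 ≤ s → s ≤ x →
      F (2*m) x - F (2*m) s = ∫ ξ in Ico s x, (F (2*m-1) x - F (2*m-1) ξ) ∂μV := by
    intro m hm s hs0 hsx
    have hmono := (mono_pair m hm).1
    have hInt : ∀ B : Set ℝ, MeasurableSet B → B ⊆ Icc 0 x →
        IntegrableOn (fun ξ => F (2*m-1) x - F (2*m-1) ξ) B μV :=
      fun B h1 h2 => hIntegrable _ hmono μV hμVIcc _ B h1 h2
    rw [hFeven m hm x, hFeven m hm s, ← Ico_union_Ico_eq_Ico hs0 hsx,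
      setIntegral_union (Set.disjoint_left.2 fun c hc hc' => absurd hc'.1 (not_le.2 hc.2))
        measurableSet_Ico
        (hInt _ measurableSet_Ico (fun c hc => ⟨hc.1, hc.2.le.trans hsx⟩))
        (hInt _ measurableSet_Ico (fun c hc => ⟨hs0.trans hc.1, hc.2.le⟩))]
    ring
  have diff_odd : ∀ m : ℕ, 1 ≤ m → ∀ s : ℝ, 0 ≤ s → s ≤ x →
      F (2*m+1) x - F (2*m+1) s = ∫ ξ in Ioc s x, (F (2*m) x - F (2*m) ξ) ∂W.measure := by
    intro m hm s hs0 hsx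
    have hmono := (mono_pair m hm).2
    have hInt : ∀ B : Set ℝ, MeasurableSet B → B ⊆ Icc 0 x →
        IntegrableOn (fun ξ => F (2*m) x - F (2*m) ξ) B W.measure :=
      fun B h1 h2 => hIntegrable _ hmono W.measure hWIcc _ B h1 h2
    rw [hFodd m hm x, hFodd m hm s, ← Ioc_union_Ioc_eq_Ioc hs0 hsx,
      setIntegral_union (Set.disjoint_left.2 fun c hc hc' => absurd hc'.1 (not_lt.2 hc.2))
        measurableSet_Ioc
        (hInt _ measurableSet_Ioc (fun c hc => ⟨hc.1.le, hc.2.trans hsx⟩))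
        (hInt _ measurableSet_Ioc (fun c hc => ⟨hs0.trans hc.1.le, hc.2⟩))]
    ring
  -- the measure ν with density (W x - W ·) against μV on [0, x)
  set K : ℝ → ℝ := fun ξ => W x - W ξ with hK
  have hKmeas : Measurable K := measurable_const.sub W.mono.measurable
  set d : ℝ → ENNReal := fun ξ => ENNReal.ofReal (K ξ) with hd
  have hdmeas : Measurable d := hKmeas.ennreal_ofReal
  set ν : Measure ℝ := (μV.restrict (Ico 0 x)).withDensity d with hν
  have hν_Ico : ∀ s : ℝ, 0 ≤ s → ν (Ico s x) = ∫⁻ ξ in Ico s x, d ξ ∂μV := by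
    intro s hs
    rw [hν, withDensity_apply _ measurableSet_Ico,
      Measure.restrict_restrict measurableSet_Ico,
      inter_eq_self_of_subset_left (Ico_subset_Ico_left hs)]
  haveI hνfin : IsFiniteMeasure ν := by
    constructor
    rw [hν, withDensity_apply _ MeasurableSet.univ, Measure.restrict_univ,
      ← Measure.restrict_univ (μ := μV.restrict (Ico 0 x)),
      Measure.restrict_restrict MeasurableSet.univ, univ_inter]
    calc ∫⁻ ξ in Ico 0 x, d ξ ∂μV
        ≤ ∫⁻ _ in Ico 0 x, ENNReal.ofReal (W x - W 0) ∂μV := by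
          refine setLIntegral_mono measurable_const fun ξ hξ => ?_
          exact ENNReal.ofReal_le_ofReal (by have := W.mono hξ.1; simp only [hK]; linarith)
      _ = ENNReal.ofReal (W x - W 0) * μV (Ico 0 x) := setLIntegral_const _ _
      _ < ⊤ := ENNReal.mul_lt_top ENNReal.ofReal_lt_top (measure_lt_top _ _)
  -- identification of F 2 differences with ν
  have hKint : ∀ s : ℝ, 0 ≤ s → IntegrableOn K (Ico s x) μV := by
    intro s hs
    exact hIntegrable (⇑W) (W.mono.monotoneOn _) μV hμVIcc (W x) _ measurableSet_Ico
      (fun c hc => ⟨hs.trans hc.1, hc.2.le⟩)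
  have hG : ∀ s : ℝ, 0 ≤ s → s ≤ x → ENNReal.ofReal (F 2 x - F 2 s) = ν (Ico s x) := by
    intro s hs0 hsx
    have h2 : F 2 x - F 2 s = ∫ ξ in Ico s x, K ξ ∂μV := by
      have h := diff_even 1 le_rfl s hs0 hsx
      simp only [show 2*1 = 2 from rfl, show 2*1-1 = 1 from rfl, hF1] at h
      exact h
    rw [h2, ofReal_integral_eq_lintegral_ofReal (hKint s hs0)
      ((ae_restrict_iff' measurableSet_Ico).2 (Filter.Eventually.of_forall fun ξ hξ => by
        have := W.mono hξ.2.le; simp only [hK, Pi.zero_apply]; linarith)), hν_Ico s hs0]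
  have hGval : ∀ s : ℝ, 0 ≤ s → s ≤ x → F 2 x - F 2 s = (ν (Ico s x)).toReal := by
    intro s hs0 hsx
    have hnn : 0 ≤ F 2 x - F 2 s := by
      have := (mono_pair 1 le_rfl).2 ⟨hs0, hsx⟩ hxmem hsx
      simp only [show 2*1 = 2 from rfl] at this
      linarith
    rw [← hG s hs0 hsx, ENNReal.toReal_ofReal hnn]
  
  -- the auxiliary decreasing function H
  set H : ℝ → ℝ := fun ξ => (ν (Ioo ξ x)).toReal with hHdef
  have hHanti : Antitone H := fun a b hab =>
    ENNReal.toReal_mono (measure_ne_top _ _) (measure_mono (Ioo_subset_Ioo_left hab))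
  have hHmeas : Measurable H := hHanti.measurable
  have hHnn : ∀ ξ, 0 ≤ H ξ := fun _ => ENNReal.toReal_nonneg
  have hHbd : ∀ ξ, H ξ ≤ (ν univ).toReal := fun ξ =>
    ENNReal.toReal_mono (measure_ne_top _ _) (measure_mono (subset_univ _))
  intro n hn
  induction n, hn using Nat.le_induction with
  | base =>
    intro s hs0 hsx
    simp only [show 2*1 = 2 from rfl, pow_one, Nat.factorial_one, Nat.cast_one, div_one, le_refl]
  | succ n hn ih =>
    obtain ⟨m, rfl⟩ : ∃ m, n = m + 1 := ⟨n - 1, by omega⟩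
    intro s hs0 hsx
    rw [show m + 1 + 1 = m + 2 from by omega]
    have hfactpos : (0:ℝ) < ((m+1).factorial : ℝ) := by
      exact_mod_cast Nat.factorial_pos (m+1)
    have hGnn : 0 ≤ F 2 x - F 2 s := by rw [hGval s hs0 hsx]; exact ENNReal.toReal_nonneg
    -- pointwise bound on the odd difference
    have hptB : ∀ ξ, 0 ≤ ξ → ξ < x →
        F (2*(m+1)+1) x - F (2*(m+1)+1) ξ ≤ H ξ ^ (m+1) * K ξ / ((m+1).factorial : ℝ) := by
      intro ξ hξ0 hξx
      rw [diff_odd (m+1) (by omega) ξ hξ0 hξx.le]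
      have hble : ∀ η ∈ Ioc ξ x, F (2*(m+1)) x - F (2*(m+1)) η
          ≤ H ξ ^ (m+1) / ((m+1).factorial : ℝ) := by
        intro η hη
        have hη0 : 0 ≤ η := hξ0.trans hη.1.le
        refine (ih η hη0 hη.2).trans ?_
        refine (div_le_div_iff_of_pos_right hfactpos).2 ?_
        have hnn : 0 ≤ F 2 x - F 2 η := by rw [hGval η hη0 hη.2]; exact ENNReal.toReal_nonneg
        have hle : F 2 x - F 2 η ≤ H ξ := by
          rw [hGval η hη0 hη.2]
          exact ENNReal.toReal_mono (measure_ne_top _ _)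
            (measure_mono fun c hc => ⟨hη.1.trans_le hc.1, hc.2⟩)
        exact pow_le_pow_left₀ hnn hle _
      calc ∫ η in Ioc ξ x, (F (2*(m+1)) x - F (2*(m+1)) η) ∂W.measure
          ≤ ∫ _η in Ioc ξ x, (H ξ ^ (m+1) / ((m+1).factorial : ℝ)) ∂W.measure := by
            refine setIntegral_mono_on ?_ ?_ measurableSet_Ioc hble
            · exact hIntegrable _ (mono_pair (m+1) (by omega)).2 W.measure hWIcc _ _
                measurableSet_Ioc (fun c hc => ⟨hξ0.trans hc.1.le, hc.2⟩)
            · exact integrableOn_const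
                (by rw [W.measure_Ioc]; exact ENNReal.ofReal_ne_top)
        _ = H ξ ^ (m+1) * K ξ / ((m+1).factorial : ℝ) := by
            rw [setIntegral_const, smul_eq_mul, measureReal_def, W.measure_Ioc,
              ENNReal.toReal_ofReal (sub_nonneg.2 (W.mono hξx.le))]
            simp only [hK]; ring
    -- integrability of the bounding function
    have hKnnIco : ∀ ξ : ℝ, ξ ∈ Ico s x → 0 ≤ K ξ := by
      intro ξ hξ
      have := W.mono hξ.2.le
      simp only [hK]; linarith
    have hBint : IntegrableOn (fun ξ => H ξ ^ (m+1) * K ξ) (Ico s x) μV := by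
      refine ⟨((hHmeas.pow_const _).mul hKmeas).aestronglyMeasurable, ?_⟩
      apply HasFiniteIntegral.of_bounded
        (C := (ν univ).toReal ^ (m+1) * (W x - W 0))
      refine (ae_restrict_iff' measurableSet_Ico).2 (Filter.Eventually.of_forall fun ξ hξ => ?_)
      have h0ξ : (0:ℝ) ≤ ξ := hs0.trans hξ.1
      have hKb : K ξ ≤ W x - W 0 := by
        have := W.mono h0ξ; simp only [hK]; linarith
      rw [Real.norm_eq_abs, abs_of_nonneg (mul_nonneg (pow_nonneg (hHnn ξ) _) (hKnnIco ξ hξ))]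
      exact mul_le_mul (pow_le_pow_left₀ (hHnn ξ) (hHbd ξ) _) hKb (hKnnIco ξ hξ)
        (pow_nonneg ENNReal.toReal_nonneg _)
    -- integrability of the odd difference
    have hDint : IntegrableOn (fun ξ => F (2*(m+1)+1) x - F (2*(m+1)+1) ξ) (Ico s x) μV := by
      have hmono := (mono_pair (m+2) (by omega)).1
      rw [show 2*(m+2)-1 = 2*(m+1)+1 from by omega] at hmono
      exact hIntegrable _ hmono μV hμVIcc _ _ measurableSet_Ico
        (fun c hc => ⟨hs0.trans hc.1, hc.2.le⟩)
    -- core estimate via the layercake lemma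
    have hcore : ∫ ξ in Ico s x, H ξ ^ (m+1) * K ξ ∂μV
        ≤ (F 2 x - F 2 s)^(m+2) / ((m:ℝ)+2) := by
      have hnnae : 0 ≤ᵐ[μV.restrict (Ico s x)] fun ξ => H ξ ^ (m+1) * K ξ :=
        (ae_restrict_iff' measurableSet_Ico).2 (Filter.Eventually.of_forall fun ξ hξ => by
          have := hKnnIco ξ hξ
          simp only [Pi.zero_apply]
          exact mul_nonneg (pow_nonneg (hHnn ξ) _) this)
      have h1 : ENNReal.ofReal (∫ ξ in Ico s x, H ξ ^ (m+1) * K ξ ∂μV)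
          = ∫⁻ ξ in Ico s x, ENNReal.ofReal (H ξ ^ (m+1) * K ξ) ∂μV :=
        ofReal_integral_eq_lintegral_ofReal hBint hnnae
      have hg : Measurable fun ξ => (ν (Ioo ξ x)) ^ (m+1) :=
        (Antitone.measurable fun a b hab => measure_mono (Ioo_subset_Ioo_left hab)).pow_const _
      have h2 : ∫⁻ ξ in Ico s x, (ν (Ioo ξ x)) ^ (m+1) ∂ν
          = ∫⁻ ξ in Ico s x, ENNReal.ofReal (H ξ ^ (m+1) * K ξ) ∂μV := by
        conv_lhs => rw [hν]
        rw [restrict_withDensity measurableSet_Ico,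
          Measure.restrict_restrict measurableSet_Ico,
          inter_eq_self_of_subset_left (Ico_subset_Ico_left hs0),
          lintegral_withDensity_eq_lintegral_mul _ hdmeas hg]
        refine lintegral_congr fun ξ => ?_
        rw [ENNReal.ofReal_mul (pow_nonneg (hHnn ξ) _), ENNReal.ofReal_pow (hHnn ξ)]
        simp only [hHdef, hd, Pi.mul_apply]
        rw [ENNReal.ofReal_toReal (measure_ne_top _ _)]
        ring
      have h3 := key_lint ν s x m
      have h4 : ENNReal.ofReal (∫ ξ in Ico s x, H ξ ^ (m+1) * K ξ ∂μV)
          ≤ ENNReal.ofReal ((F 2 x - F 2 s)^(m+2) / ((m:ℝ)+2)) := by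
        rw [h1, ← h2]
        refine h3.trans ?_
        rw [hGval s hs0 hsx]
      refine (ENNReal.ofReal_le_ofReal_iff ?_).1 h4
      exact div_nonneg (pow_nonneg hGnn _) (by positivity)
    -- final computation
    calc F (2*(m+2)) x - F (2*(m+2)) s
        = ∫ ξ in Ico s x, (F (2*(m+1)+1) x - F (2*(m+1)+1) ξ) ∂μV := by
          have h := diff_even (m+2) (by omega) s hs0 hsx
          rw [show 2*(m+2)-1 = 2*(m+1)+1 from by omega] at h
          exact h
      _ ≤ ∫ ξ in Ico s x, (H ξ ^ (m+1) * K ξ / ((m+1).factorial : ℝ)) ∂μV := by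
          refine setIntegral_mono_on hDint (hBint.div_const _) measurableSet_Ico ?_
          intro ξ hξ
          exact hptB ξ (hs0.trans hξ.1) hξ.2
      _ = (∫ ξ in Ico s x, H ξ ^ (m+1) * K ξ ∂μV) / ((m+1).factorial : ℝ) := integral_div _ _
      _ ≤ ((F 2 x - F 2 s)^(m+2) / ((m:ℝ)+2)) / ((m+1).factorial : ℝ) :=
          (div_le_div_iff_of_pos_right hfactpos).2 hcore
      _ = (F 2 x - F 2 s)^(m+2) / (((m+2).factorial : ℕ) : ℝ) := by
          rw [div_div]
          congr 1
          rw [show m+2 = m+1+1 from by omega, Nat.factorial_succ (m+1)]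
          push_cast
          ring
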